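/- Let F be the free group on two generators x and y, and let φ be an automorphism of F such that φ(y) = y^ν for some ν ∈ {1, -1}. Then φ(x) = y^k x^ε y^l for some integers k, l and some ε ∈ {1, -1}. -/

import Mathlib

set_option linter.unusedSectionVars false
set_option linter.unusedVariables false

namespace Stmt0Aux

open FreeGroup List

variable {α : Type*} [DecidableEq α]

/-- adjacent cancellation -/
def Canc (a b : α × Bool) : Prop := a.1 = b.1 ∧ a.2 = !b.2

instance : DecidablePred (fun p : (α × Bool) × (α × Bool) => Canc p.1 p.2) := by
  unfold Canc; infer_instance

def Reduced (L : List (α × Bool)) : Prop := List.IsChain (fun a b => ¬ Canc a b) L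

theorem Reduced.reduce_eq {L : List (α × Bool)} (h : Reduced L) : reduce L = L := by
  induction L with
  | nil => simp
  | cons a L ih =>
    have hL : Reduced L := h.tail
    rw [reduce.cons, ih hL]
    cases L with
    | nil => rfl
    | cons b tl =>
      have hc : ¬ Canc a b := (List.isChain_cons_cons.mp h).1
      unfold Canc at hc
      simp [hc]

theorem reduced_reduce (L : List (α × Bool)) : Reduced (reduce L) := by
  induction L with
  | nil => simp [Reduced]
  | cons a L ih =>
    rw [reduce.cons]
    rcases hL : reduce L with _ | ⟨b, tl⟩
    · simp [Reduced]
    · rw [hL] at ih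
      by_cases hc : a.1 = b.1 ∧ a.2 = !b.2
      · simpa [hc, Reduced] using ih.tail
      · simp only [hc, if_false]
        exact List.isChain_cons_cons.mpr ⟨fun h => hc h, ih⟩

theorem reduced_toWord (g : FreeGroup α) : Reduced g.toWord := by
  rw [← reduce_toWord]; exact reduced_reduce _

theorem Reduced.word_mk {L : List (α × Bool)} (h : Reduced L) : (mk L).toWord = L := by
  rw [FreeGroup.toWord_mk, h.reduce_eq]

/-- no-cancellation multiplication -/
theorem toWord_mul_nc (a b : FreeGroup α)
    (h : ∀ p ∈ a.toWord.getLast?, ∀ q ∈ b.toWord.head?, ¬ Canc p q) :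
    (a * b).toWord = a.toWord ++ b.toWord := by
  have hab : a * b = mk (a.toWord ++ b.toWord) := by
    rw [← mul_mk, mk_toWord, mk_toWord]
  rw [hab]
  exact Reduced.word_mk (List.isChain_append.mpr ⟨reduced_toWord a, reduced_toWord b, h⟩)

theorem toWord_of_zpow (a : α) (c : ℤ) :
    (of a ^ c).toWord = List.replicate c.natAbs (a, decide (0 < c)) := by
  rcases lt_trichotomy c 0 with hc | rfl | hc
  · have h1 : of a ^ c = (of a ^ (-c).toNat)⁻¹ := by
      rw [← zpow_natCast, Int.toNat_of_nonneg (by omega), ← zpow_neg, neg_neg]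
    rw [h1, toWord_inv, toWord_of_pow]
    have h2 : ¬ (0 < c) := by omega
    simp only [h2, decide_eq_false_iff_not.mpr h2]
    have : c.natAbs = (-c).toNat := by omega
    rw [this]
    simp [invRev]
  · simp
  · have h1 : of a ^ c = of a ^ c.toNat := by rw [← zpow_natCast, Int.toNat_of_nonneg (by omega)]
    rw [h1, toWord_of_pow]
    have h2 : (decide (0 < c)) = true := by simpa using hc
    rw [h2]
    have h3 : c.toNat = c.natAbs := by omega
    rw [h3]


theorem pow_facts : ∀ (N : ℕ) (v : FreeGroup α), v.toWord.length ≤ N → v ≠ 1 →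
    ∀ n : ℕ, 1 ≤ n →
      (v ^ n).toWord ≠ [] ∧ (v ^ n).toWord.head? = v.toWord.head? ∧
      (v ^ n).toWord.getLast? = v.toWord.getLast? ∧
      v.toWord.length ≤ (v ^ n).toWord.length := by
  intro N
  induction N with
  | zero =>
    intro v hlen hv n hn
    exact absurd (toWord_eq_nil_iff.mp (List.eq_nil_of_length_eq_zero (Nat.le_zero.mp hlen))) hv
  | succ N ih =>
    intro v hlen hv n hn
    have hLne : v.toWord ≠ [] := fun h => hv (toWord_eq_nil_iff.mp h)
    by_cases hcr : ∀ p ∈ v.toWord.getLast?, ∀ q ∈ v.toWord.head?, ¬ Canc p q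
    · -- cyclically reduced case: induction on n
      clear ih hlen
      induction n with
      | zero => omega
      | succ n ihn =>
        by_cases hn1 : n = 0
        · subst hn1
          rw [pow_one]
          exact ⟨hLne, rfl, rfl, le_rfl⟩
        · obtain ⟨p1, p2, p3, p4⟩ := ihn (by omega)
          have hm : (v ^ (n+1)) = v * v ^ n := by rw [pow_succ']
          have hw : (v * v ^ n).toWord = v.toWord ++ (v ^ n).toWord := by
            apply toWord_mul_nc
            intro p hp q hq
            rw [p2] at hq
            exact hcr p hp q hq
          rw [hm, hw]
          refine ⟨by simp [hLne], ?_, ?_, ?_⟩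
          · rw [List.head?_append_of_ne_nil _ hLne]
          · rw [List.getLast?_append_of_ne_nil _ p1, p3]
          · rw [List.length_append]; omega
    · -- peeling case
      push_neg at hcr
      obtain ⟨p, hp, q, hq, hpq⟩ := hcr
      have hq' : v.toWord.head? = some q := Option.mem_def.mp hq
      have hp' : v.toWord.getLast? = some p := Option.mem_def.mp hp
      obtain ⟨t, hL⟩ : ∃ t, v.toWord = q :: t := by
        cases h : v.toWord with
        | nil => exact absurd h hLne
        | cons a t =>
          rw [h] at hq'
          have ha : a = q := by simpa using hq'
          exact ⟨t, by rw [ha]⟩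
      cases t with
      | nil =>
        exfalso
        rw [hL] at hp'
        have hpq0 : p = q := by simpa using hp'.symm
        subst hpq0
        obtain ⟨_, h2⟩ := hpq
        simp at h2
      | cons a t' =>
        set T : List (α × Bool) := a :: t' with hT
        have hpT : p ∈ T.getLast? := by
          rw [hL, List.getLast?_cons_cons] at hp'
          rw [hp']; rfl
        have hTsplit : T.dropLast ++ [p] = T := List.dropLast_append_getLast? _ hpT
        set mid := T.dropLast with hmid
        have hred : Reduced (q :: (mid ++ [p])) := by
          have h0 := reduced_toWord v
          rw [hL, ← hTsplit] at h0
          exact h0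
        have Hq : ∀ y ∈ (mid ++ [p]).head?, ¬ Canc q y := (List.isChain_cons.mp hred).1
        have Crest : List.Chain' (fun a b => ¬ Canc a b) (mid ++ [p]) := (List.isChain_cons.mp hred).2
        have Cmid : Reduced mid := (List.isChain_append.mp Crest).1
        have C3 : ∀ x ∈ mid.getLast?, ¬ Canc x p := by
          intro x hx
          exact (List.isChain_append.mp Crest).2.2 x hx p rfl
        have hmidne : mid ≠ [] := by
          intro h
          have h5 : (mid ++ [p]).head? = some p := by rw [h]; rfl
          have hcq : ¬ Canc q p := Hq p (by rw [h5]; rfl)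
          apply hcq
          obtain ⟨h1, h2⟩ := hpq
          exact ⟨h1.symm, by rw [h2]; simp⟩
        have Hqmid : ∀ y ∈ mid.head?, ¬ Canc q y := by
          intro y hy
          apply Hq
          rw [List.head?_append_of_ne_nil _ hmidne]
          exact hy
        set v'' := mk mid with hv''
        have hv''w : v''.toWord = mid := Reduced.word_mk Cmid
        have hv''ne : v'' ≠ 1 := fun h => hmidne (by rw [← hv''w, h, toWord_one])
        have hlen'' : v''.toWord.length ≤ N := by
          rw [hv''w]
          have h1 : v.toWord.length = mid.length + 2 := by
            rw [hL, ← hTsplit]; simp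
          omega
        have hpeq : p = (q.1, !q.2) := by
          obtain ⟨h1, h2⟩ := hpq
          exact Prod.ext h1 h2
        set g := mk [q] with hg
        have hginv : g⁻¹ = mk [p] := by
          rw [hg, inv_mk, hpeq]
          congr 1
        have hvconj : v = g * v'' * g⁻¹ := by
          conv_lhs => rw [← mk_toWord (x := v)]
          rw [hL, ← hTsplit, hginv, hg, hv'', mul_mk, mul_mk]
          rfl
        have hvn : v ^ n = g * v'' ^ n * g⁻¹ := by rw [hvconj, conj_pow]
        obtain ⟨i1, i2, i3, i4⟩ := ih v'' hlen'' hv''ne n hn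
        rw [hv''w] at i2 i3 i4
        have hgw : g.toWord = [q] := Reduced.word_mk (List.isChain_singleton _)
        have hginvw : g⁻¹.toWord = [p] := by
          rw [hginv]
          exact Reduced.word_mk (List.isChain_singleton _)
        have stepA : (g * v'' ^ n).toWord = q :: (v'' ^ n).toWord := by
          rw [toWord_mul_nc, hgw]
          · rfl
          · intro x hx y hy
            rw [hgw] at hx
            obtain rfl : q = x := by simpa using hx
            rw [i2] at hy
            exact Hqmid y hy
        have stepB : (g * v'' ^ n * g⁻¹).toWord = (q :: (v'' ^ n).toWord) ++ [p] := by
          rw [toWord_mul_nc, stepA, hginvw]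
          intro x hx y hy
          rw [stepA] at hx
          have hx' : x ∈ (v'' ^ n).toWord.getLast? := by
            cases hvw : (v'' ^ n).toWord with
            | nil => exact absurd hvw i1
            | cons b tb =>
              rw [hvw, List.getLast?_cons_cons] at hx
              exact hx
          rw [i3] at hx'
          rw [hginvw] at hy
          obtain rfl : p = y := by simpa using hy
          exact C3 x hx'
        rw [hvn, stepB]
        refine ⟨by simp, by rw [hL]; rfl, ?_, ?_⟩
        · rw [List.getLast?_concat, hL, List.getLast?_cons_cons]
          exact (Option.mem_def.mp hpT).symm
        · have h1 : v.toWord.length = mid.length + 2 := by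
            rw [hL, ← hTsplit]; simp
          simp only [List.length_append, List.length_cons, List.length_nil]
          omega


theorem zpow_gen_facts (v : FreeGroup α) (hv : v ≠ 1) (a : α)
    (h1 : v.toWord.head?.map Prod.fst = some a)
    (h2 : v.toWord.getLast?.map Prod.fst = some a)
    (d : ℤ) (hd : d ≠ 0) :
    (v ^ d).toWord ≠ [] ∧ (v ^ d).toWord.head?.map Prod.fst = some a ∧
      (v ^ d).toWord.getLast?.map Prod.fst = some a ∧
      v.toWord.length ≤ (v ^ d).toWord.length := by
  rcases lt_or_gt_of_ne hd with hneg | hpos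
  · have hvd : v ^ d = (v⁻¹) ^ (-d).toNat := by
      rw [← zpow_natCast, Int.toNat_of_nonneg (by omega), inv_zpow', neg_neg]
    have hvine : v⁻¹ ≠ 1 := fun h => hv (by rwa [inv_eq_one] at h)
    obtain ⟨i1, i2, i3, i4⟩ :=
      pow_facts (v⁻¹).toWord.length v⁻¹ le_rfl hvine (-d).toNat (by omega)
    have hinvw : (v⁻¹).toWord = invRev v.toWord := toWord_inv v
    have hσ : ∀ L : List (α × Bool), (invRev L).head?.map Prod.fst = L.getLast?.map Prod.fst := by
      intro L
      unfold invRev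
      rw [List.head?_reverse, List.getLast?_map, Option.map_map]
      cases L.getLast? with
      | none => rfl
      | some p => rfl
    have hσ' : ∀ L : List (α × Bool), (invRev L).getLast?.map Prod.fst = L.head?.map Prod.fst := by
      intro L
      unfold invRev
      rw [← List.head?_reverse, List.reverse_reverse, List.head?_map, Option.map_map]
      cases L.head? with
      | none => rfl
      | some p => rfl
    rw [hvd]
    refine ⟨i1, ?_, ?_, ?_⟩
    · rw [i2, hinvw, hσ, h2]
    · rw [i3, hinvw, hσ', h1]
    · have : (v⁻¹).toWord.length = v.toWord.length := by rw [hinvw, invRev_length]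
      omega
  · have hvd : v ^ d = v ^ d.toNat := by
      rw [← zpow_natCast, Int.toNat_of_nonneg (by omega)]
    obtain ⟨i1, i2, i3, i4⟩ :=
      pow_facts v.toWord.length v le_rfl hv d.toNat (by omega)
    rw [hvd]
    exact ⟨i1, by rw [i2, h1], by rw [i3, h2], i4⟩

section NF

variable {G : Type*} [Group G] (w y : G)

inductive NFx : G → Prop
  | ytail (c : ℤ) : NFx (y ^ c)
  | cons (c d : ℤ) (hc : c ≠ 0) (hd : d ≠ 0) (t : G) (ht : NFx t) : NFx (y ^ c * w ^ d * t)

def NF (g : G) : Prop :=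
  (∃ m : ℤ, g = y ^ m) ∨ ∃ c d : ℤ, ∃ t : G, d ≠ 0 ∧ NFx w y t ∧ g = y ^ c * w ^ d * t

variable {w y}

theorem NFx.nf {g : G} (h : NFx w y g) : NF w y g := by
  cases h with
  | ytail c => exact Or.inl ⟨c, rfl⟩
  | cons c d hc hd t ht => exact Or.inr ⟨c, d, t, hd, ht, rfl⟩

theorem NF.y_mul {g : G} (e : ℤ) (h : NF w y g) : NF w y (y ^ e * g) := by
  rcases h with ⟨m, rfl⟩ | ⟨c, d, t, hd, ht, rfl⟩
  · exact Or.inl ⟨e + m, by rw [zpow_add]⟩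
  · exact Or.inr ⟨e + c, d, t, hd, ht, by rw [zpow_add]; group⟩

theorem NF.w_mul {g : G} (e : ℤ) (he : e ≠ 0) (h : NF w y g) : NF w y (w ^ e * g) := by
  rcases h with ⟨m, rfl⟩ | ⟨c, d, t, hd, ht, rfl⟩
  · exact Or.inr ⟨0, e, y ^ m, he, NFx.ytail m, by rw [zpow_zero, one_mul]⟩
  · by_cases hc : c = 0
    · subst hc
      by_cases hed : e + d = 0
      · have hgt : w ^ e * (y ^ (0:ℤ) * w ^ d * t) = t := by
          rw [zpow_zero, one_mul, ← mul_assoc, ← zpow_add, hed, zpow_zero, one_mul]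
        rw [hgt]
        exact ht.nf
      · have hgt : w ^ e * (y ^ (0:ℤ) * w ^ d * t) = y ^ (0:ℤ) * w ^ (e + d) * t := by
          rw [zpow_zero, one_mul, one_mul, ← mul_assoc, ← zpow_add]
        rw [hgt]
        exact Or.inr ⟨0, e + d, t, hed, ht, rfl⟩
    · exact Or.inr ⟨0, e, y ^ c * w ^ d * t, he,
        NFx.cons c d hc hd t ht, by rw [zpow_zero, one_mul]⟩

theorem NF.one : NF w y (1 : G) := Or.inl ⟨0, by simp⟩

theorem nf_of_mem_closure {g : G} (h : g ∈ Subgroup.closure {w, y}) : NF w y g := by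
  induction h using Subgroup.closure_induction_left with
  | one => exact NF.one
  | mul_left x hx g' hg' ih =>
    rcases hx with rfl | rfl
    · simpa using ih.w_mul 1 one_ne_zero
    · simpa using ih.y_mul 1
  | inv_mul_cancel x hx g' hg' ih =>
    rcases hx with rfl | rfl
    · simpa using ih.w_mul (-1) (by norm_num)
    · simpa using ih.y_mul (-1)

end NF


theorem replicate_head? (n : ℕ) (hn : n ≠ 0) (x : α × Bool) :
    (List.replicate n x).head? = some x := by
  cases n with
  | zero => omega
  | succ n => rfl

theorem replicate_getLast? (n : ℕ) (hn : n ≠ 0) (x : α × Bool) :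
    (List.replicate n x).getLast? = some x := by
  induction n with
  | zero => omega
  | succ n ih =>
    cases hn2 : n with
    | zero => rfl
    | succ m =>
      rw [List.replicate_succ]
      rw [← hn2]
      have : (List.replicate n x) ≠ [] := by
        intro h
        have := congrArg List.length h
        simp [hn2] at this
      cases h : List.replicate n x with
      | nil => exact absurd h this
      | cons b tb =>
        rw [List.getLast?_cons_cons, ← h, ih (by omega)]

theorem mk_all_eq_zpow (a : α) : ∀ L : List (α × Bool), (∀ p ∈ L, p.1 = a) →
    ∃ c : ℤ, mk L = of a ^ c := by
  intro L
  induction L with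
  | nil => exact fun _ => ⟨0, by rw [zpow_zero]; rfl⟩
  | cons p L ih =>
    intro h
    obtain ⟨c, hc⟩ := ih fun q hq => h q (List.mem_cons_of_mem _ hq)
    have hp : p.1 = a := h p (List.mem_cons_self)
    have hsplit : mk (p :: L) = mk [p] * mk L := by rw [mul_mk]; rfl
    cases hb : p.2 with
    | true =>
      have hofa : mk [p] = of a := by
        have hpe : p = (a, true) := Prod.ext hp hb
        rw [hpe]; rfl
      exact ⟨1 + c, by rw [hsplit, hofa, hc, zpow_add, zpow_one]⟩
    | false =>
      have hpe : p = (a, false) := Prod.ext hp hb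
      have hofa : mk [p] = (of a)⁻¹ := by
        rw [hpe, show of a = mk [(a,true)] from rfl, inv_mk]
        rfl
      exact ⟨-1 + c, by rw [hsplit, hofa, hc, zpow_add, zpow_neg_one]⟩

/-- the word of a full block `y^c * (w^d * t)` -/
theorem block_word (w : FreeGroup (Fin 2))
    (hw1 : w.toWord ≠ [])
    (hwh : w.toWord.head?.map Prod.fst = some 0)
    (hwl : w.toWord.getLast?.map Prod.fst = some 0)
    (c d : ℤ) (hd : d ≠ 0) (t : FreeGroup (Fin 2))
    (htw : t = 1 ∨ (t.toWord ≠ [] ∧ t.toWord.head?.map Prod.fst = some 1)) :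
    (of (1:Fin 2) ^ c * (w ^ d * t)).toWord
      = (of (1:Fin 2) ^ c).toWord ++ ((w ^ d).toWord ++ t.toWord) := by
  have hwne : w ≠ 1 := fun h => hw1 (by rw [h, toWord_one])
  obtain ⟨z1, z2, z3, z4⟩ := zpow_gen_facts w hwne 0 hwh hwl d hd
  have hB : (w ^ d * t).toWord = (w ^ d).toWord ++ t.toWord := by
    apply toWord_mul_nc
    intro p hp q hq
    rcases htw with rfl | ⟨hne, hh⟩
    · rw [toWord_one] at hq; cases hq
    · have hp1 : p.1 = 0 := by
        rw [Option.mem_def] at hp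
        rw [hp] at z3; simpa using z3
      have hq1 : q.1 = 1 := by
        rw [Option.mem_def] at hq
        rw [hq] at hh; simpa using hh
      intro hcanc
      obtain ⟨h1, _⟩ := hcanc
      rw [hp1, hq1] at h1
      exact absurd h1 (by decide)
  rw [← hB]
  apply toWord_mul_nc
  intro p hp q hq
  have hp1 : p.1 = 1 := by
    rw [Option.mem_def, toWord_of_zpow] at hp
    by_cases hc0 : c = 0
    · rw [hc0] at hp; simp at hp
    · rw [replicate_getLast? _ (by omega) _] at hp
      have hpe : ((1:Fin 2), decide (0 < c)) = p := by simpa using hp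
      rw [← hpe]
  have hq1 : q.1 = 0 := by
    rw [Option.mem_def, hB, List.head?_append_of_ne_nil _ z1] at hq
    rw [hq] at z2; simpa using z2
  intro hcanc
  obtain ⟨h1, _⟩ := hcanc
  rw [hp1, hq1] at h1
  exact absurd h1 (by decide)

theorem NFx_word (w : FreeGroup (Fin 2))
    (hw1 : w.toWord ≠ [])
    (hwh : w.toWord.head?.map Prod.fst = some 0)
    (hwl : w.toWord.getLast?.map Prod.fst = some 0) :
    ∀ t : FreeGroup (Fin 2), NFx w (of 1) t →
      t = 1 ∨ (t.toWord ≠ [] ∧ t.toWord.head?.map Prod.fst = some 1) := by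
  intro t ht
  induction ht with
  | ytail c =>
    by_cases hc : c = 0
    · left; rw [hc, zpow_zero]
    · right
      rw [toWord_of_zpow]
      refine ⟨by simp [hc], ?_⟩
      rw [replicate_head? _ (by omega) _]
      rfl
  | cons c d hc hd t' ht' ih =>
    right
    have hwne : w ≠ 1 := fun h => hw1 (by rw [h, toWord_one])
    obtain ⟨z1, z2, z3, z4⟩ := zpow_gen_facts w hwne 0 hwh hwl d hd
    have hfull := block_word w hw1 hwh hwl c d hd t' ih
    rw [mul_assoc, hfull]
    have hcrep : (of (1:Fin 2) ^ c).toWord = List.replicate c.natAbs (1, decide (0 < c)) :=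
      toWord_of_zpow 1 c
    constructor
    · simp [hcrep, hc]
    · rw [List.head?_append_of_ne_nil _ (by simp [hcrep, hc]), hcrep,
        replicate_head? _ (by omega) _]
      rfl

theorem main_word (w : FreeGroup (Fin 2)) (hw1 : w.toWord ≠ [])
    (hwh : w.toWord.head?.map Prod.fst = some 0)
    (hwl : w.toWord.getLast?.map Prod.fst = some 0)
    (h : (∃ m : ℤ, of (0:Fin 2) = of (1:Fin 2) ^ m) ∨
      ∃ c d : ℤ, ∃ t : FreeGroup (Fin 2), d ≠ 0 ∧ NFx w (of 1) t ∧
        of (0:Fin 2) = of (1:Fin 2) ^ c * w ^ d * t) :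
    w.toWord.length ≤ 1 := by
  rcases h with ⟨m, hm⟩ | ⟨c, d, t, hd, ht, heq⟩
  · exfalso
    have := congrArg FreeGroup.toWord hm
    rw [toWord_of, toWord_of_zpow] at this
    cases hn : m.natAbs with
    | zero => rw [hn] at this; simp at this
    | succ n =>
      rw [hn, List.replicate_succ] at this
      have := (List.cons.injEq _ _ _ _).mp this
      have h01 : (0 : Fin 2) = 1 := congrArg Prod.fst this.1
      exact absurd h01 (by decide)
  · have hwne : w ≠ 1 := fun h => hw1 (by rw [h, toWord_one])
    obtain ⟨z1, z2, z3, z4⟩ := zpow_gen_facts w hwne 0 hwh hwl d hd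
    have hfull := block_word w hw1 hwh hwl c d hd t (NFx_word w hw1 hwh hwl t ht)
    rw [mul_assoc] at heq
    have h1 : (FreeGroup.of (0:Fin 2)).toWord.length
        = c.natAbs + ((w ^ d).toWord.length + t.toWord.length) := by
      rw [heq, hfull]
      simp [toWord_of_zpow]
    rw [toWord_of] at h1
    simp at h1
    omega


theorem x_ne_ypow (m : ℤ) : FreeGroup.of (0:Fin 2) ≠ FreeGroup.of 1 ^ m := by
  intro hm
  have h := congrArg FreeGroup.toWord hm
  rw [toWord_of, toWord_of_zpow] at h
  cases hn : m.natAbs with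
  | zero => rw [hn] at h; simp at h
  | succ n =>
    rw [hn, List.replicate_succ] at h
    have h2 := (List.cons.injEq _ _ _ _).mp h
    have h01 : (0 : Fin 2) = 1 := congrArg Prod.fst h2.1
    exact absurd h01 (by decide)

theorem dropWhile_head_not (p : α × Bool → Bool) :
    ∀ (l : List (α × Bool)) (q : α × Bool), q ∈ (l.dropWhile p).head? → ¬ p q := by
  intro l
  induction l with
  | nil => intro q hq; simp at hq
  | cons a l ih =>
    intro q hq
    by_cases hpa : p a
    · rw [List.dropWhile_cons_of_pos hpa] at hq
      exact ih q hq
    · rw [List.dropWhile_cons_of_neg hpa] at hq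
      have haq : a = q := by simpa using hq
      rw [← haq]
      exact hpa

theorem stmt0_aux (φ : FreeGroup (Fin 2) ≃* FreeGroup (Fin 2)) (ν : ℤ)
    (hν : ν = 1 ∨ ν = -1)
    (hy : φ (FreeGroup.of 1) = (FreeGroup.of 1) ^ ν) :
    ∃ (k l ε : ℤ), (ε = 1 ∨ ε = -1) ∧
      φ (FreeGroup.of 0) =
        (FreeGroup.of 1) ^ k * (FreeGroup.of 0) ^ ε * (FreeGroup.of 1) ^ l := by
  classical
  set w : FreeGroup (Fin 2) := φ (FreeGroup.of 0) with hwdef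
  -- step 1 : of 0 ∈ closure {w, of 1}
  have htop : Subgroup.closure ({of 0, of 1} : Set (FreeGroup (Fin 2))) = ⊤ := by
    rw [eq_top_iff, ← FreeGroup.closure_range_of (Fin 2)]
    refine (Subgroup.closure_le _).mpr ?_
    rintro g ⟨i, rfl⟩
    fin_cases i
    · exact Subgroup.subset_closure (Or.inl rfl)
    · exact Subgroup.subset_closure (Or.inr rfl)
  have himg : Subgroup.closure ({w, φ (of 1)} : Set (FreeGroup (Fin 2))) = ⊤ := by
    have h2 := MonoidHom.map_closure φ.toMonoidHom {of 0, of 1}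
    rw [htop, Subgroup.map_top_of_surjective _ φ.surjective, Set.image_pair] at h2
    simpa using h2.symm
  have hxcl : of (0:Fin 2) ∈ Subgroup.closure ({w, of 1} : Set (FreeGroup (Fin 2))) := by
    have hmem : of (0:Fin 2) ∈ Subgroup.closure ({w, φ (of 1)} : Set (FreeGroup (Fin 2))) := by
      rw [himg]; trivial
    have hle : Subgroup.closure ({w, φ (of 1)} : Set (FreeGroup (Fin 2)))
        ≤ Subgroup.closure ({w, of 1} : Set (FreeGroup (Fin 2))) := by
      rw [Subgroup.closure_le]
      rintro g (rfl | rfl)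
      · exact Subgroup.subset_closure (Or.inl rfl)
      · simp only [SetLike.mem_coe]
        rw [hy]
        have h6 : (of 1 : FreeGroup (Fin 2)) ∈ Subgroup.closure ({w, of 1} : Set (FreeGroup (Fin 2))) :=
          Subgroup.subset_closure (Or.inr rfl)
        exact zpow_mem h6 ν
    exact hle hmem
  -- step 2 : strip leading/trailing y-letters
  set pred : Fin 2 × Bool → Bool := fun p => p.1 = 1 with hpred
  set W := w.toWord with hW
  set Y1 := W.takeWhile pred with hY1def
  set rest := W.dropWhile pred with hrestdef
  set M := (rest.reverse.dropWhile pred).reverse with hMdef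
  set Y2 := (rest.reverse.takeWhile pred).reverse with hY2def
  have hW1 : W = Y1 ++ rest := (List.takeWhile_append_dropWhile (p := pred) (l := W)).symm
  have hrest : rest = M ++ Y2 := by
    have h3 : rest.reverse = (rest.reverse.takeWhile pred) ++ (rest.reverse.dropWhile pred) :=
      (List.takeWhile_append_dropWhile (p := pred) (l := rest.reverse)).symm
    calc rest = rest.reverse.reverse := (List.reverse_reverse _).symm
    _ = ((rest.reverse.takeWhile pred) ++ (rest.reverse.dropWhile pred)).reverse := by rw [← h3]
    _ = M ++ Y2 := by rw [List.reverse_append]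
  have hY1y : ∀ p ∈ Y1, p.1 = 1 := by
    intro p hp
    have := List.mem_takeWhile_imp hp
    simpa [hpred] using this
  have hY2y : ∀ p ∈ Y2, p.1 = 1 := by
    intro p hp
    rw [hY2def, List.mem_reverse] at hp
    have := List.mem_takeWhile_imp hp
    simpa [hpred] using this
  obtain ⟨c1, hc1⟩ := mk_all_eq_zpow 1 Y1 hY1y
  obtain ⟨c2, hc2⟩ := mk_all_eq_zpow 1 Y2 hY2y
  set w' := mk M with hw'def
  have hwdec : w = of 1 ^ c1 * (w' * of 1 ^ c2) := by
    conv_lhs => rw [← mk_toWord (x := w)]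
    rw [show w.toWord = Y1 ++ (M ++ Y2) from by rw [← hrest, ← hW1],
      ← mul_mk, ← mul_mk, hc1, hc2]
  -- step 3 : of 0 ∈ closure {w', of 1}
  have hmem' : of (0:Fin 2) ∈ Subgroup.closure ({w', of 1} : Set (FreeGroup (Fin 2))) := by
    have hle : Subgroup.closure ({w, of 1} : Set (FreeGroup (Fin 2)))
        ≤ Subgroup.closure ({w', of 1} : Set (FreeGroup (Fin 2))) := by
      rw [Subgroup.closure_le]
      rintro g (rfl | rfl)
      · simp only [SetLike.mem_coe]
        rw [hwdec]
        have h6 : (of 1 : FreeGroup (Fin 2)) ∈ Subgroup.closure ({w', of 1} : Set (FreeGroup (Fin 2))) :=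
          Subgroup.subset_closure (Or.inr rfl)
        have h7 : w' ∈ Subgroup.closure ({w', of 1} : Set (FreeGroup (Fin 2))) :=
          Subgroup.subset_closure (Or.inl rfl)
        exact mul_mem (zpow_mem h6 c1) (mul_mem h7 (zpow_mem h6 c2))
      · exact Subgroup.subset_closure (Or.inr rfl)
    exact hle hxcl
  -- step 4 : M is nonempty
  have hMne : M ≠ [] := by
    intro hM
    have hw'1 : w' = 1 := by rw [hw'def, hM]; rfl
    have : of (0:Fin 2) ∈ Subgroup.closure ({of 1} : Set (FreeGroup (Fin 2))) := by
      have hle : Subgroup.closure ({w', of 1} : Set (FreeGroup (Fin 2)))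
          ≤ Subgroup.closure ({of 1} : Set (FreeGroup (Fin 2))) := by
        rw [Subgroup.closure_le]
        rintro g (rfl | rfl)
        · simp only [SetLike.mem_coe]
          rw [hw'1]; exact one_mem _
        · exact Subgroup.subset_closure rfl
      exact hle hmem'
    obtain ⟨n, hn⟩ := Subgroup.mem_closure_singleton.mp this
    exact x_ne_ypow n hn.symm
  have hrestne : rest ≠ [] := by
    intro h
    rw [h] at hrest
    exact hMne (List.append_eq_nil_iff.mp hrest.symm).1
  -- step 5 : word facts about M
  have hMred : Reduced M := by
    have hinf : M <:+: W := ⟨Y1, Y2, by rw [hW1, hrest, List.append_assoc]⟩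
    exact List.IsChain.infix (reduced_toWord w) hinf
  have hw'W : w'.toWord = M := Reduced.word_mk hMred
  have fin2ne : ∀ i : Fin 2, i ≠ 1 → i = 0 := by decide
  have hMhead : M.head?.map Prod.fst = some 0 := by
    have h4 : M.head? = rest.head? := by
      rw [hrest, List.head?_append_of_ne_nil _ hMne]
    cases hh : rest.head? with
    | none => rw [List.head?_eq_none_iff] at hh; exact absurd hh hrestne
    | some q =>
      have hq : ¬ pred q := dropWhile_head_not pred W q (by rw [← hrestdef, hh]; rfl)
      have : q.1 = 0 := fin2ne q.1 (by simpa [hpred] using hq)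
      rw [h4, hh, Option.map_some, this]
  have hMlast : M.getLast?.map Prod.fst = some 0 := by
    have h4 : M.getLast? = (rest.reverse.dropWhile pred).head? := by
      rw [hMdef, List.getLast?_reverse]
    cases hh : (rest.reverse.dropWhile pred).head? with
    | none =>
      rw [List.head?_eq_none_iff] at hh
      exact absurd (show M = [] from by rw [hMdef, hh]; rfl) hMne
    | some q =>
      have hq : ¬ pred q := dropWhile_head_not pred rest.reverse q (by rw [hh]; rfl)
      have : q.1 = 0 := fin2ne q.1 (by simpa [hpred] using hq)
      rw [h4, hh, Option.map_some, this]
  -- step 6 : M has length one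
  have hMw1 : w'.toWord ≠ [] := by rw [hw'W]; exact hMne
  have hNF : NF w' (of 1) (of (0:Fin 2)) := nf_of_mem_closure hmem'
  have hlen : w'.toWord.length ≤ 1 :=
    main_word w' hMw1 (by rw [hw'W]; exact hMhead) (by rw [hw'W]; exact hMlast) hNF
  rw [hw'W] at hlen
  have hMlen1 : M.length = 1 := by
    have h5 : M.length ≠ 0 := fun h => hMne (List.eq_nil_of_length_eq_zero h)
    omega
  obtain ⟨m0, hm0⟩ := List.length_eq_one_iff.mp hMlen1
  have hm01 : m0.1 = 0 := by
    rw [hm0] at hMhead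
    simpa using hMhead
  -- step 7 : conclude
  have hef : ∃ ε : ℤ, (ε = 1 ∨ ε = -1) ∧ w' = of 0 ^ ε := by
    cases hb : m0.2 with
    | true =>
      refine ⟨1, Or.inl rfl, ?_⟩
      have : m0 = ((0:Fin 2), true) := Prod.ext hm01 hb
      rw [hw'def, hm0, this, zpow_one]
      rfl
    | false =>
      refine ⟨-1, Or.inr rfl, ?_⟩
      have hme : m0 = ((0:Fin 2), false) := Prod.ext hm01 hb
      rw [hw'def, hm0, hme, zpow_neg_one,
        show of (0:Fin 2) = mk [((0:Fin 2),true)] from rfl, inv_mk]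
      rfl
  obtain ⟨ε, hεor, hw'e⟩ := hef
  exact ⟨c1, c2, ε, hεor, by rw [hwdec, hw'e, ← mul_assoc]⟩


end Stmt0Aux

/-- If `φ` is an automorphism of the free group on two generators `x, y`
with `φ y = y^ν` for `ν ∈ {1, -1}`, then `φ x = y^k x^ε y^l` for some integers `k, l`
and `ε ∈ {1, -1}`. -/
theorem stmt0 (φ : FreeGroup (Fin 2) ≃* FreeGroup (Fin 2)) (ν : ℤ)
    (hν : ν = 1 ∨ ν = -1)
    (hy : φ (FreeGroup.of 1) = (FreeGroup.of 1) ^ ν) :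
    ∃ (k l ε : ℤ), (ε = 1 ∨ ε = -1) ∧
      φ (FreeGroup.of 0) =
        (FreeGroup.of 1) ^ k * (FreeGroup.of 0) ^ ε * (FreeGroup.of 1) ^ l :=
  Stmt0Aux.stmt0_aux φ ν hν hy
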